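/- Lemma (real index, even-dimensional Lorentzian case): let m ≥ 1 and n = 2m. Every m-dimensional totally null complex subspace N of ℂ^{2m} (with respect to the complexified Lorentzian form B_ℂ) has real index exactly 1, i.e. dim_ℂ (N ⊓ c(N)) = 1. -/

import Mathlib

open Complex Finset


/-- The complexified Minkowski bilinear form on `ℂⁿ`:
`B(x,y) = -x₀·y₀ + ∑_{i=1}^{n-1} x_i·y_i`. -/
noncomputable def minkB (n : ℕ) (x y : Fin n → ℂ) : ℂ :=
  ∑ i : Fin n, if (i : ℕ) = 0 then -(x i * y i) else x i * y i

/-- The image of a complex subspace of `ℂⁿ` under componentwise complex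
conjugation (again a complex subspace, since conjugation is an antilinear
involution): `c(N) = {x | c(x) ∈ N}`. -/
noncomputable def conjSubmodule (n : ℕ) (N : Submodule ℂ (Fin n → ℂ)) : Submodule ℂ (Fin n → ℂ) where
  carrier := {x | (fun i => (starRingEnd ℂ) (x i)) ∈ N}
  add_mem' := by
    intro a b ha hb
    have h : (fun i => (starRingEnd ℂ) ((a + b) i))
        = (fun i => (starRingEnd ℂ) (a i)) + (fun i => (starRingEnd ℂ) (b i)) := by
      funext i; simp
    show (fun i => (starRingEnd ℂ) ((a + b) i)) ∈ N
    rw [h]; exact N.add_mem ha hb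
  zero_mem' := by
    show (fun i => (starRingEnd ℂ) ((0 : Fin n → ℂ) i)) ∈ N
    have h : (fun i : Fin n => (starRingEnd ℂ) ((0 : Fin n → ℂ) i)) = (0 : Fin n → ℂ) := by
      funext i; simp
    rw [h]; exact N.zero_mem
  smul_mem' := by
    intro c a ha
    have h : (fun i => (starRingEnd ℂ) ((c • a) i))
        = (starRingEnd ℂ) c • (fun i => (starRingEnd ℂ) (a i)) := by
      funext i; simp [mul_comm]
    show (fun i => (starRingEnd ℂ) ((c • a) i)) ∈ N
    rw [h]; exact N.smul_mem ((starRingEnd ℂ) c) ha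


/-- Splitting off the `0`-th term of a "signed" sum. -/
lemma sum_signed_eq {n : ℕ} (hn : 0 < n) {M : Type*} [AddCommGroup M] (a : Fin n → M) :
    (∑ i : Fin n, if (i : ℕ) = 0 then -(a i) else a i)
      = (∑ i : Fin n, a i) - (a ⟨0, hn⟩ + a ⟨0, hn⟩) := by
  have h : ∀ i : Fin n, (if (i : ℕ) = 0 then -(a i) else a i)
      = a i - (if i = ⟨0, hn⟩ then a i + a i else 0) := by
    intro i
    by_cases hi : (i : ℕ) = 0
    · have : i = ⟨0, hn⟩ := Fin.ext hi
      simp [hi, this]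
    · have : i ≠ ⟨0, hn⟩ := by
        intro h'; exact hi (by simp [h'])
      simp [hi, this]
  rw [Finset.sum_congr rfl (fun i _ => h i), Finset.sum_sub_distrib,
    Finset.sum_ite_eq' Finset.univ (⟨0, hn⟩ : Fin n) (fun i => a i + a i)]
  simp

/-- If `z` is null for the complexified Minkowski form, then the signed sum of
`normSq` of its coordinates is nonnegative. -/
lemma key_nonneg {n : ℕ} (hn : 0 < n) (z : Fin n → ℂ) (hz : minkB n z z = 0) :
    0 ≤ ∑ i : Fin n, (if (i : ℕ) = 0 then -(normSq (z i)) else normSq (z i)) := by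
  set i0 : Fin n := ⟨0, hn⟩ with hi0
  rw [minkB, sum_signed_eq hn] at hz
  have h1 : (∑ i : Fin n, z i * z i) = 2 * (z i0 * z i0) := by
    rw [sub_eq_zero] at hz; rw [hz]; ring
  have h2 : ‖∑ i : Fin n, z i * z i‖ ≤ ∑ i : Fin n, normSq (z i) := by
    refine le_trans (norm_sum_le _ _) (le_of_eq ?_)
    exact Finset.sum_congr rfl fun i _ => by rw [norm_mul, ← sq, Complex.sq_norm]
  have h3 : ‖2 * (z i0 * z i0)‖ = 2 * normSq (z i0) := by
    rw [norm_mul, norm_mul, ← sq, Complex.sq_norm, Complex.norm_two]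
  rw [h1, h3] at h2
  rw [sum_signed_eq hn]
  nlinarith [h2]

lemma mem_conjSubmodule {n : ℕ} {N : Submodule ℂ (Fin n → ℂ)} {x : Fin n → ℂ} :
    x ∈ conjSubmodule n N ↔ (fun i => (starRingEnd ℂ) (x i)) ∈ N := Iff.rfl

/-- The real-linear equivalence between `c(N)` and `N` given by conjugation. -/
noncomputable def conjLinearEquiv (n : ℕ) (N : Submodule ℂ (Fin n → ℂ)) :
    ↥(conjSubmodule n N) ≃ₗ[ℝ] ↥N where
  toFun x := ⟨fun i => (starRingEnd ℂ) (x.1 i), x.2⟩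
  invFun x := ⟨fun i => (starRingEnd ℂ) (x.1 i), by
    have : (fun i => (starRingEnd ℂ) ((starRingEnd ℂ) (x.1 i))) = x.1 := by
      funext i; simp
    show (fun i => (starRingEnd ℂ) ((starRingEnd ℂ) (x.1 i))) ∈ N
    rw [this]; exact x.2⟩
  map_add' x y := by ext i; simp
  map_smul' r x := by ext i; simp
  left_inv x := by ext i; simp
  right_inv x := by ext i; simp

lemma finrank_conjSubmodule (n : ℕ) (N : Submodule ℂ (Fin n → ℂ)) :
    Module.finrank ℂ ↥(conjSubmodule n N) = Module.finrank ℂ ↥N := by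
  have hR : Module.finrank ℝ ↥(conjSubmodule n N) = Module.finrank ℝ ↥N :=
    (conjLinearEquiv n N).finrank_eq
  have h1 := Module.finrank_mul_finrank ℝ ℂ ↥(conjSubmodule n N)
  have h2 := Module.finrank_mul_finrank ℝ ℂ ↥N
  rw [Complex.finrank_real_complex] at h1 h2
  omega

/-- Real index in the even-dimensional Lorentzian case: every `m`-dimensional
totally null complex subspace `N` of `ℂ^{2m}` has real index exactly `1`,
i.e. `dim_ℂ (N ⊓ c(N)) = 1`. -/
theorem real_index_even (m : ℕ) (hm : 1 ≤ m)
    (N : Submodule ℂ (Fin (2 * m) → ℂ))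
    (hdim : Module.finrank ℂ N = m)
    (hnull : ∀ x ∈ N, ∀ y ∈ N, minkB (2 * m) x y = 0) :
    Module.finrank ℂ ↥(N ⊓ conjSubmodule (2 * m) N) = 1 := by
  have hn : 0 < 2 * m := by omega
  set cN := conjSubmodule (2 * m) N with hcN
  set i0 : Fin (2 * m) := ⟨0, hn⟩ with hi0
  -- Upper bound: the 0-th coordinate map is injective on W
  have hub : Module.finrank ℂ ↥(N ⊓ cN) ≤ 1 := by
    have hinj : Function.Injective ((LinearMap.proj i0 : (Fin (2 * m) → ℂ) →ₗ[ℂ] ℂ).comp (N ⊓ cN).subtype) := by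
      intro x y hxy
      have hsub : (x : Fin (2 * m) → ℂ) - y ∈ N ⊓ cN := (N ⊓ cN).sub_mem x.2 y.2
      set v : Fin (2 * m) → ℂ := (x : Fin (2 * m) → ℂ) - y with hv
      have hv0 : v i0 = 0 := by
        simp only [LinearMap.comp_apply, LinearMap.proj_apply, Submodule.subtype_apply] at hxy
        simp [hv, hxy]
      have hvN : v ∈ N := hsub.1
      have hvcN : (fun i => (starRingEnd ℂ) (v i)) ∈ N := hsub.2
      have hnull' : minkB (2 * m) v (fun i => (starRingEnd ℂ) (v i)) = 0 :=
        hnull v hvN _ hvcN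
      rw [minkB, sum_signed_eq hn] at hnull'
      have hterm : ∀ i : Fin (2 * m), v i * (starRingEnd ℂ) (v i) = (normSq (v i) : ℂ) := by
        intro i; exact Complex.mul_conj (v i)
      rw [sub_eq_zero] at hnull'
      have hsum : (∑ i : Fin (2 * m), (normSq (v i) : ℂ)) = 0 := by
        rw [← Finset.sum_congr rfl (fun i _ => hterm i), hnull', hv0]
        simp
      have hsumR : (∑ i : Fin (2 * m), normSq (v i)) = 0 := by
        exact_mod_cast (by push_cast at hsum ⊢; exact_mod_cast hsum)
      have hall : ∀ i : Fin (2 * m), normSq (v i) = 0 := by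
        intro i
        have := (Finset.sum_eq_zero_iff_of_nonneg
          (fun i _ => normSq_nonneg (v i))).mp hsumR i (Finset.mem_univ i)
        exact this
      have hv0' : v = 0 := by
        funext i; exact normSq_eq_zero.mp (hall i)
      have : (x : Fin (2 * m) → ℂ) = y := by
        have := sub_eq_zero.mp hv0'
        exact this
      exact Subtype.ext this
    have := LinearMap.finrank_le_finrank_of_injective hinj
    simpa [Module.finrank_self] using this
  -- Lower bound: e₀ ∉ N ⊔ cN
  have hSnn : ∀ v ∈ N ⊔ cN,
      0 ≤ ∑ i : Fin (2 * m), (if (i : ℕ) = 0 then -(normSq (v i)) else normSq (v i)) := by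
    intro v hv
    obtain ⟨x, hx, y, hy, rfl⟩ := Submodule.mem_sup.mp hv
    have hcross : minkB (2 * m) x (fun i => (starRingEnd ℂ) (y i)) = 0 :=
      hnull x hx _ hy
    have hcrossRe : (∑ i : Fin (2 * m), (if (i : ℕ) = 0
        then -(x i * (starRingEnd ℂ) (y i)) else x i * (starRingEnd ℂ) (y i))).re = 0 := by
      rw [← minkB, hcross]; rfl
    rw [Complex.re_sum] at hcrossRe
    have hx0 : 0 ≤ ∑ i : Fin (2 * m), (if (i : ℕ) = 0 then -(normSq (x i)) else normSq (x i)) :=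
      key_nonneg hn x (hnull x hx x hx)
    have hy0 : 0 ≤ ∑ i : Fin (2 * m), (if (i : ℕ) = 0 then -(normSq (y i)) else normSq (y i)) := by
      have := key_nonneg hn (fun i => (starRingEnd ℂ) (y i)) (hnull _ hy _ hy)
      simpa [normSq_conj] using this
    have hsplit : ∀ i : Fin (2 * m),
        (if (i : ℕ) = 0 then -(normSq ((x + y) i)) else normSq ((x + y) i))
        = (if (i : ℕ) = 0 then -(normSq (x i)) else normSq (x i))
          + (if (i : ℕ) = 0 then -(normSq (y i)) else normSq (y i))
          + 2 * ((if (i : ℕ) = 0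
              then -(x i * (starRingEnd ℂ) (y i)) else x i * (starRingEnd ℂ) (y i)).re) := by
      intro i
      by_cases hi : (i : ℕ) = 0 <;>
        simp [hi, Complex.normSq_add] <;> ring
    calc (0:ℝ) ≤ (∑ i : Fin (2 * m), (if (i : ℕ) = 0 then -(normSq (x i)) else normSq (x i)))
          + (∑ i : Fin (2 * m), (if (i : ℕ) = 0 then -(normSq (y i)) else normSq (y i)))
          + 2 * ∑ i : Fin (2 * m), ((if (i : ℕ) = 0
              then -(x i * (starRingEnd ℂ) (y i)) else x i * (starRingEnd ℂ) (y i)).re) := by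
            rw [hcrossRe]; simpa using add_nonneg hx0 hy0
      _ = _ := by
            rw [Finset.mul_sum, ← Finset.sum_add_distrib, ← Finset.sum_add_distrib]
            exact Finset.sum_congr rfl fun i _ => (hsplit i).symm
  have he0 : (fun i : Fin (2 * m) => if (i : ℕ) = 0 then (1:ℂ) else 0) ∉ N ⊔ cN := by
    intro hmem
    have := hSnn _ hmem
    have heq : (∑ i : Fin (2 * m), (if (i : ℕ) = 0
        then -(normSq (if (i : ℕ) = 0 then (1:ℂ) else 0))
        else normSq (if (i : ℕ) = 0 then (1:ℂ) else 0))) = -1 := by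
      have h : ∀ i : Fin (2 * m), (if (i : ℕ) = 0
          then -(normSq (if (i : ℕ) = 0 then (1:ℂ) else 0))
          else normSq (if (i : ℕ) = 0 then (1:ℂ) else 0)) = if i = i0 then (-1:ℝ) else 0 := by
        intro i
        by_cases hi : (i : ℕ) = 0
        · have : i = i0 := Fin.ext hi
          simp [hi, this, hi0]
        · have : i ≠ i0 := fun h' => hi (by simp [h', hi0])
          simp [hi, this]
      rw [Finset.sum_congr rfl (fun i _ => h i),
        Finset.sum_ite_eq' Finset.univ i0 (fun _ => (-1:ℝ))]
      simp
    rw [heq] at this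
    linarith
  have hsup_ne : N ⊔ cN ≠ ⊤ := by
    intro h
    exact he0 (h ▸ Submodule.mem_top)
  have hfd : FiniteDimensional ℂ (Fin (2 * m) → ℂ) := by infer_instance
  have hsuplt : Module.finrank ℂ ↥(N ⊔ cN) < 2 * m := by
    have := Submodule.finrank_lt (K := ℂ) (V := Fin (2 * m) → ℂ) hsup_ne
    simpa [Module.finrank_fin_fun] using this
  have hcNdim : Module.finrank ℂ ↥cN = m := by
    rw [hcN, finrank_conjSubmodule, hdim]
  have hsum := Submodule.finrank_sup_add_finrank_inf_eq N cN
  rw [hdim, hcNdim] at hsum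
  omega
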